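/- A subgroup of index k in a free group of rank n is free of rank 1 + k(n-1). -/

import Mathlib

noncomputable section
open scoped Classical
open CategoryTheory CategoryTheory.ActionCategory CategoryTheory.SingleObj Quiver FreeGroup
open SemidirectProduct IsFreeGroupoid

universe u

namespace NSIF

lemma basisUniqueLift {G : Type u} [Group G] {ι : Type u} (b : FreeGroupBasis ι G)
    {H : Type u} [Group H] (f : ι → H) : ∃! F : G →* H, ∀ a, F (b a) = f a := by
  have h := b.lift.symm.bijective.existsUnique f
  simp only [funext_iff, FreeGroupBasis.lift_symm_apply, MonoidHom.coe_comp,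
    Function.comp_apply] at h
  exact h

set_option linter.unusedVariables false in
/-- Variant of `CategoryTheory.actionGroupoidIsFree` with an explicit basis. -/
def actionFreeGroupoid {G A : Type u} [Group G] [MulAction G A] {ι : Type u}
    (b : FreeGroupBasis ι G) : IsFreeGroupoid (ActionCategory G A) where
  quiverGenerators :=
    ⟨fun x y => { e : ι // b e • x.back = y.back }⟩
  of := fun (e : { e // _ }) => ⟨b e.val, e.property⟩
  unique_lift := by
    intro X _ f
    let f' : ι → (A → X) ⋊[mulAutArrow] G := fun e =>
      ⟨fun s => @f ⟨(), _⟩ ⟨(), s⟩ ⟨e, smul_inv_smul _ s⟩, b e⟩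
    rcases basisUniqueLift b f' with ⟨F', hF', uF'⟩
    refine ⟨uncurry F' ?_, ?_, ?_⟩
    · suffices SemidirectProduct.rightHom.comp F' = MonoidHom.id _ by
        exact DFunLike.ext_iff.mp this
      apply b.ext_hom
      intro x
      rw [MonoidHom.comp_apply, hF']
      rfl
    · rintro ⟨⟨⟩, a : A⟩ ⟨⟨⟩, c⟩ ⟨e, h : b e • a = c⟩
      change (F' (b _)).left _ = _
      rw [hF']
      cases inv_smul_eq_iff.mpr h.symm
      rfl
    · intro E hE
      have : curry E = F' := by
        apply uF'
        intro e
        ext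
        · convert! hE _ _ _
          rfl
        · rfl
      apply Functor.hext
      · intro
        apply Unit.ext
      · refine ActionCategory.cases ?_
        intros
        subst this
        rfl

section SpanningTree

variable {G : Type u} [Groupoid.{u} G] [IsFreeGroupoid G]
  (T : WideSubquiver (Symmetrify <| Generators G)) [Arborescence T]

/-- The root of `T`, with type `G`. -/
def groot : G :=
  Quiver.root (WideSubquiver.toType (Symmetrify <| Generators G) T)

/-- A path in the tree gives a hom, by composition. -/
def ghomOfPath : ∀ {a : G}, Path (Quiver.root T) a → (groot T ⟶ a)
  | _, Path.nil => 𝟙 _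
  | _, Path.cons p f => ghomOfPath p ≫ Sum.recOn f.val (fun e => of e) fun e => Groupoid.inv (of e)

/-- For every vertex `a`, there is a canonical hom from the root. -/
def gtreeHom (a : G) : groot T ⟶ a :=
  ghomOfPath T (Arborescence.uniquePath (V := WideSubquiver.toType _ T) a).default

theorem gtreeHom_eq {a : G} (p : Path (Quiver.root T) a) : gtreeHom T a = ghomOfPath T p := by
  rw [gtreeHom, (Arborescence.uniquePath (V := WideSubquiver.toType _ T) a).uniq p]

@[simp]
theorem gtreeHom_root : gtreeHom T (groot T) = 𝟙 _ :=
  _root_.trans (gtreeHom_eq T Path.nil) rfl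

/-- Any hom in `G` can be made into a loop, by conjugating with `gtreeHom`s. -/
def gloopOfHom {a b : G} (p : a ⟶ b) : End (groot T) :=
  gtreeHom T a ≫ p ≫ Groupoid.inv (gtreeHom T b)

/-- Turning an edge in the spanning tree into a loop gives the identity loop. -/
theorem gloopOfHom_eq_id {a b : Generators G} (e) (H : e ∈ wideSubquiverSymmetrify T a b) :
    gloopOfHom T (of e) = 𝟙 (groot T) := by
  erw [gloopOfHom, ← Category.assoc, Groupoid.inv_eq_inv, IsIso.comp_inv_eq, Category.id_comp]
  cases' H with H H
  · erw [gtreeHom_eq T (Path.cons (Arborescence.uniquePath (V := WideSubquiver.toType _ T) a).default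
      ⟨Sum.inl e, H⟩), ghomOfPath]
    rfl
  · erw [gtreeHom_eq T (Path.cons (Arborescence.uniquePath (V := WideSubquiver.toType _ T) b).default
      ⟨Sum.inr e, H⟩), ghomOfPath]
    simp only [Groupoid.inv_eq_inv, IsIso.inv_hom_id, Category.comp_id, Category.assoc, gtreeHom]
    erw [Category.assoc, Groupoid.inv_comp, Category.comp_id]

/-- Since a hom gives a loop, any homomorphism from the vertex group at the root
    extends to a functor on the whole groupoid. -/
@[simps]
def gfunctorOfMonoidHom {X} [Monoid X] (f : End (groot T) →* X) :
    G ⥤ CategoryTheory.SingleObj X where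
  obj _ := ()
  map p := f (gloopOfHom T p)
  map_id := by
    intro a
    dsimp only [gloopOfHom]
    rw [Category.id_comp, Groupoid.inv_eq_inv, IsIso.hom_inv_id, ← End.one_def, f.map_one,
      id_as_one]
  map_comp := by
    intros
    rw [comp_as_mul, ← f.map_mul]
    simp only [gloopOfHom, Groupoid.inv_eq_inv, IsIso.inv_hom_id_assoc, End.mul_def,
      Category.assoc]

/-- Variant of `IsFreeGroupoid.SpanningTree.endIsFree` producing a `FreeGroupBasis`. -/
def endBasis :
    FreeGroupBasis ((wideSubquiverEquivSetTotal <| wideSubquiverSymmetrify T)ᶜ : Set _)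
      (End (groot T)) :=
  FreeGroupBasis.ofUniqueLift
    ((wideSubquiverEquivSetTotal <| wideSubquiverSymmetrify T)ᶜ : Set _)
    (fun e => gloopOfHom T (of e.val.hom))
    (by
      intro X _ f
      let f' : Labelling (Generators G) X := fun a b e =>
        if h : e ∈ wideSubquiverSymmetrify T a b then 1 else f ⟨⟨a, b, e⟩, h⟩
      rcases unique_lift f' with ⟨F', hF', uF'⟩
      refine ⟨F'.mapEnd _, ?_, ?_⟩
      · suffices ∀ {x y} (q : x ⟶ y), F'.map (gloopOfHom T q) = (F'.map q : X) by
          rintro ⟨⟨a, b, e⟩, h⟩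
          erw [Functor.mapEnd_apply, this, hF']
          exact dif_neg h
        intros x y q
        suffices ∀ {a} (p : Path (Quiver.root T) a), F'.map (ghomOfPath T p) = 1 by
          simp only [this, gtreeHom, comp_as_mul, Groupoid.inv_eq_inv, inv_as_inv,
            gloopOfHom, inv_one, mul_one, one_mul, Functor.map_inv, Functor.map_comp]
          erw [this (a := x), this (a := y), inv_one, one_mul, mul_one]
        intro a p
        induction' p with b c p e ih
        · rw [ghomOfPath]
          exact F'.map_id _
        change F'.map (ghomOfPath T p ≫ Sum.recOn e.val (fun e => of e) fun e => Groupoid.inv (of e)) = 1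
        erw [F'.map_comp, comp_as_mul, ih, mul_one]
        rcases e with ⟨e | e, eT⟩
        · show F'.map (IsFreeGroupoid.of e) = 1
          erw [hF']
          exact dif_pos (Or.inl eT)
        · show F'.map (Groupoid.inv (IsFreeGroupoid.of e)) = 1
          erw [Groupoid.inv_eq_inv, F'.map_inv, inv_as_inv, inv_eq_one, hF']
          exact dif_pos (Or.inr eT)
      · intro E hE
        ext x
        suffices (gfunctorOfMonoidHom T E).map x = F'.map x by
          simpa only [gloopOfHom, gfunctorOfMonoidHom, Groupoid.inv_eq_inv, IsIso.inv_id,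
            gtreeHom_root, Category.id_comp, Category.comp_id] using! this
        congr
        apply uF'
        intro a b e
        change E (gloopOfHom T _) = dite _ _ _
        split_ifs with h
        · rw [gloopOfHom_eq_id T e h, ← End.one_def, E.map_one]
        · exact hE ⟨⟨a, b, e⟩, h⟩)

end SpanningTree




/- Arborescence facts -/

lemma default_path_cons {W : Type*} [Quiver W] [Arborescence W] {a b : W} (e : a ⟶ b) :
    (default : Path (Quiver.root W) b) = (default : Path (Quiver.root W) a).cons e :=
  Subsingleton.elim _ _

lemma arrow_ne_root {W : Type*} [Quiver W] [Arborescence W] {a b : W} (e : a ⟶ b) :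
    b ≠ Quiver.root W := by
  rintro rfl
  exact Path.nil_ne_cons (default : Path (Quiver.root W) a) e (Subsingleton.elim _ _)

lemma arrow_target_inj {W : Type*} [Quiver W] [Arborescence W] {a a' b : W}
    (e : a ⟶ b) (e' : a' ⟶ b) : a = a' ∧ HEq e e' := by
  have h : (default : Path (Quiver.root W) a).cons e
      = (default : Path (Quiver.root W) a').cons e' :=
    (default_path_cons e).symm.trans (default_path_cons e')
  obtain rfl := Path.obj_eq_of_cons_eq_cons h
  exact ⟨rfl, Path.hom_heq_of_cons_eq_cons h⟩

lemma exists_arrow_of_ne_root {W : Type*} [Quiver W] [Arborescence W] {b : W}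
    (hb : b ≠ Quiver.root W) : ∃ a, Nonempty (a ⟶ b) := by
  cases h : (default : Path (Quiver.root W) b) with
  | nil => exact absurd rfl hb
  | cons p e => exact ⟨_, ⟨e⟩⟩

def arborEquiv (W : Type*) [Quiver W] [Arborescence W] :
    (Σ a b : W, a ⟶ b) ≃ {b : W // b ≠ Quiver.root W} := by
  refine Equiv.ofBijective (fun x => ⟨x.2.1, arrow_ne_root x.2.2⟩) ⟨?_, ?_⟩
  · rintro ⟨a, b, e⟩ ⟨a', b', e'⟩ h
    simp only [Subtype.mk.injEq] at h
    subst h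
    obtain ⟨rfl, he⟩ := arrow_target_inj e e'
    cases he
    rfl
  · rintro ⟨b, hb⟩
    obtain ⟨a, ⟨e⟩⟩ := exists_arrow_of_ne_root hb
    exact ⟨⟨a, b, e⟩, rfl⟩


section Sym

variable {V : Type u} [Quiver.{v} V]

def sym2total (T : WideSubquiver (Symmetrify V)) : (Σ a b : T, a ⟶ b) → Total V :=
  fun x =>
    match x with
    | ⟨a, b, ⟨Sum.inl e, _⟩⟩ => ⟨a, b, e⟩
    | ⟨a, b, ⟨Sum.inr e, _⟩⟩ => ⟨b, a, e⟩

lemma sym2total_mem (T : WideSubquiver (Symmetrify V)) (x : Σ a b : T, a ⟶ b) :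
    sym2total T x ∈ wideSubquiverEquivSetTotal (wideSubquiverSymmetrify T) := by
  rcases x with ⟨a, b, ⟨e | e, he⟩⟩
  · exact Or.inl he
  · exact Or.inr he

lemma no_two_cycle {W : Type*} [Quiver W] [Arborescence W] {a b : W}
    (f : a ⟶ b) (g : b ⟶ a) : False := by
  have hb := default_path_cons f
  have ha := default_path_cons g
  have : ((default : Path (Quiver.root W) b)).length
      = ((default : Path (Quiver.root W) b)).length + 2 := by
    conv_lhs => rw [hb, ha]
    simp [Path.length_cons]
  omega

lemma sym2total_inj (T : WideSubquiver (Symmetrify V)) [Arborescence T] :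
    Function.Injective (sym2total T) := by
  rintro ⟨a, b, ⟨e | e, he⟩⟩ ⟨a', b', ⟨e' | e', he'⟩⟩ h <;>
    (rw [sym2total] at h; rw [Total.ext_iff] at h; obtain ⟨h1, h2, h3⟩ := h)
  · subst h1; subst h2; cases h3; rfl
  · subst h1; subst h2; cases h3
    have f : @Quiver.Hom _ (WideSubquiver.quiver T) a b := ⟨Sum.inl e, he⟩
    have g : @Quiver.Hom _ (WideSubquiver.quiver T) b a := ⟨Sum.inr e, he'⟩
    exact (no_two_cycle f g).elim
  · subst h1; subst h2; cases h3
    have f : @Quiver.Hom _ (WideSubquiver.quiver T) a b := ⟨Sum.inr e, he⟩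
    have g : @Quiver.Hom _ (WideSubquiver.quiver T) b a := ⟨Sum.inl e, he'⟩
    exact (no_two_cycle f g).elim
  · subst h1; subst h2; cases h3; rfl

lemma sym2total_surj (T : WideSubquiver (Symmetrify V)) (x : Total V)
    (hx : x ∈ wideSubquiverEquivSetTotal (wideSubquiverSymmetrify T)) :
    ∃ y, sym2total T y = x := by
  obtain ⟨a, b, e⟩ := x
  rcases hx with h | h
  · exact ⟨⟨a, b, ⟨Sum.inl e, h⟩⟩, rfl⟩
  · exact ⟨⟨b, a, ⟨Sum.inr e, h⟩⟩, rfl⟩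

def totalSetEquiv (T : WideSubquiver (Symmetrify V)) [Arborescence T] :
    (Σ a b : T, a ⟶ b) ≃
      ↥(wideSubquiverEquivSetTotal (wideSubquiverSymmetrify T)) := by
  refine Equiv.ofBijective (fun x => ⟨sym2total T x, sym2total_mem T x⟩) ⟨?_, ?_⟩
  · intro x y h
    exact sym2total_inj T (congrArg Subtype.val h)
  · rintro ⟨x, hx⟩
    obtain ⟨y, hy⟩ := sym2total_surj T x hx
    exact ⟨y, Subtype.ext hy⟩

end Sym


theorem endEquivFree {G A : Type u} [Group G] [MulAction G A] {ι : Type u}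
    (bG : FreeGroupBasis ι G) [MulAction.IsPretransitive G A] [Nonempty A] [Finite A]
    [Finite ι] (x : A) (m : ℕ)
    (hm : Nat.card ι * Nat.card A + 1 = m + Nat.card A) :
    Nonempty (End (ActionCategory.objEquiv G A x) ≃* FreeGroup (Fin m)) := by
  letI fg : IsFreeGroupoid (ActionCategory G A) := actionFreeGroupoid bG
  let r : Symmetrify (Generators (ActionCategory G A)) := ActionCategory.objEquiv G A x
  letI : RootedConnected r :=
    ⟨fun c => path_nonempty_of_hom (@CategoryTheory.nonempty_hom_of_preconnected_groupoid (ActionCategory G A) _ (@IsConnected.toIsPreconnected _ _ (inferInstanceAs (IsConnected (ActionCategory G A)))) r c)⟩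
  let T := geodesicSubtree r
  letI arbT : Arborescence (WideSubquiver.toType _ T) := geodesicArborescence r
  let B := endBasis T
  -- the arrows of the generating quiver correspond to `A × ι`
  have e4 : Total (Generators (ActionCategory G A)) ≃ A × ι := by
    refine
      { toFun := fun t => (ActionCategory.back (M := G) (X := A) t.left, Subtype.val t.hom)
        invFun := fun p =>
          { left := show ActionCategory G A from ⟨(), p.1⟩
            right := show ActionCategory G A from ⟨(), (bG p.2 • p.1 : A)⟩
            hom := ⟨p.2, rfl⟩ }
        left_inv := ?_
        right_inv := ?_ }
    · rintro ⟨⟨⟨⟩, (a : A)⟩, ⟨⟨⟩, (c : A)⟩, ⟨i, hi⟩⟩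
      obtain rfl : bG i • a = c := hi
      rfl
    · rintro ⟨a, i⟩
      rfl
  -- cardinality computations
  haveI hfinA : Finite (ActionCategory G A) := Finite.of_equiv A (ActionCategory.objEquiv G A)
  haveI hfinW : Finite (WideSubquiver.toType (Symmetrify <| Generators (ActionCategory G A)) T) :=
    hfinA
  haveI hfinTot : Finite (Total (Generators (ActionCategory G A))) :=
    Finite.of_equiv _ e4.symm
  have e2 := totalSetEquiv T
  have e3 := arborEquiv (WideSubquiver.toType (Symmetrify <| Generators (ActionCategory G A)) T)
  have cW : Nat.card (WideSubquiver.toType (Symmetrify <| Generators (ActionCategory G A)) T)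
      = Nat.card A := Nat.card_congr ((ActionCategory.objEquiv G A).symm : ActionCategory G A ≃ A)
  have cTot : Nat.card (Total (Generators (ActionCategory G A))) = Nat.card ι * Nat.card A := by
    rw [Nat.card_congr e4, Nat.card_prod, Nat.mul_comm]
  have cFull : Nat.card ↥(wideSubquiverEquivSetTotal (wideSubquiverSymmetrify T))
      = Nat.card A - 1 := by
    rw [Nat.card_congr (e2.symm.trans e3)]
    classical
    haveI : Fintype (WideSubquiver.toType (Symmetrify <| Generators (ActionCategory G A)) T) :=
      Fintype.ofFinite _
    rw [← cW, Nat.card_eq_fintype_card, Nat.card_eq_fintype_card]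
    have h5 : Fintype.card {c : (WideSubquiver.toType (Symmetrify <| Generators
        (ActionCategory G A)) T) // ¬ (c = Quiver.root _)} = Fintype.card _
        - Fintype.card {c : (WideSubquiver.toType
        (Symmetrify <| Generators (ActionCategory G A)) T) // c = Quiver.root _} :=
      Fintype.card_subtype_compl _
    simp only [Fintype.card_subtype_eq] at h5
    convert h5 using 2
  have hA1 : 1 ≤ Nat.card A := Nat.one_le_iff_ne_zero.mpr (Nat.card_ne_zero.mpr ⟨‹_›, ‹_›⟩)
  have cS : Nat.card ↥((wideSubquiverEquivSetTotal <| wideSubquiverSymmetrify T)ᶜ : Set _) = m := by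
    have hsplit :
        (wideSubquiverEquivSetTotal (wideSubquiverSymmetrify T)).ncard
          + ((wideSubquiverEquivSetTotal (wideSubquiverSymmetrify T))ᶜ).ncard
          = Nat.card (Total (Generators (ActionCategory G A))) :=
      Set.ncard_add_ncard_compl _
    rw [Nat.card_coe_set_eq]
    rw [Nat.card_coe_set_eq] at cFull
    omega
  -- build the final equivalence
  classical
  haveI : Finite ↥((wideSubquiverEquivSetTotal <| wideSubquiverSymmetrify T)ᶜ : Set _) :=
    Subtype.finite
  haveI : Fintype ↥((wideSubquiverEquivSetTotal <| wideSubquiverSymmetrify T)ᶜ : Set _) :=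
    Fintype.ofFinite _
  have eFin : ↥((wideSubquiverEquivSetTotal <| wideSubquiverSymmetrify T)ᶜ : Set _) ≃ Fin m :=
    Fintype.equivFinOfCardEq (by rw [← Nat.card_eq_fintype_card]; exact cS)
  exact ⟨(B.reindex eFin).repr⟩

end NSIF

/-- Nielsen–Schreier index formula: a subgroup of index `k` in a free group of
rank `n` is free of rank `1 + k * (n - 1)`. -/
theorem nielsen_schreier_index_formula (n k : ℕ) (hn : 0 < n) (hk : 0 < k)
    (H : Subgroup (FreeGroup (Fin n))) (hH : H.index = k) :
    Nonempty (H ≃* FreeGroup (Fin (1 + k * (n - 1)))) := by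
  have hcard : Nat.card (FreeGroup (Fin n) ⧸ H) = k := hH
  haveI : Finite (FreeGroup (Fin n) ⧸ H) :=
    (Nat.card_ne_zero.mp (by omega)).2
  haveI : Nonempty (FreeGroup (Fin n) ⧸ H) :=
    (Nat.card_ne_zero.mp (by omega)).1
  have hm : Nat.card (Fin n) * Nat.card (FreeGroup (Fin n) ⧸ H) + 1
      = (1 + k * (n - 1)) + Nat.card (FreeGroup (Fin n) ⧸ H) := by
    rw [Nat.card_eq_fintype_card (α := Fin n), Fintype.card_fin, hcard]
    obtain ⟨n', rfl⟩ : ∃ n', n = n' + 1 := ⟨n - 1, (Nat.succ_pred_eq_of_pos hn).symm⟩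
    rw [Nat.add_sub_cancel, Nat.succ_mul, Nat.mul_comm n' k]
    omega
  obtain ⟨e⟩ := NSIF.endEquivFree (FreeGroupBasis.ofFreeGroup (Fin n))
    (A := FreeGroup (Fin n) ⧸ H) ((1 : FreeGroup (Fin n)) : FreeGroup (Fin n) ⧸ H)
    (1 + k * (n - 1)) hm
  exact ⟨((CategoryTheory.ActionCategory.endMulEquivSubgroup H).symm.trans e)⟩
example {G A : Type u} [Group G] [MulAction G A] [MulAction.IsPretransitive G A] [Nonempty A] : IsConnected (ActionCategory G A) := inferInstance
example {G A : Type u} [Group G] [MulAction G A] [MulAction.IsPretransitive G A] [Nonempty A] : IsPreconnected (ActionCategory G A) := inferInstance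
example {G A : Type u} [Group G] [MulAction G A] [MulAction.IsPretransitive G A] [Nonempty A] : IsPreconnected (ActionCategory G A) := @IsConnected.toIsPreconnected _ _ inferInstance
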